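/- Let ψ : [0,∞) → [0,∞) be an increasing concave function with ψ(0) = 0 and ψ(t) → ∞ as t → ∞, satisfying condition (2.1). Let δ > 0 and let H : (0,∞) → [0,∞) be nonincreasing with H ∈ L^q(0,∞) for every 1 < q < 1+δ and sup_{t>2} (1/ψ(t)) ∫_0^t H(s) ds < ∞. Let D(t) denote the Lebesgue measure of {s ∈ (0,∞) : H(s) > 1/t}. Then for every exponentiation invariant extended limit ω one has ω( t ↦ (1/ψ(t)) ∫_0^t H(s) ds ) = ω( t ↦ (1/ψ(t)) ∫_0^{D(t)} H(s) ds ) (both inner functions, restricted to a neighbourhood of ∞, are bounded). -/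

import Mathlib

open MeasureTheory Filter Set Topology
open scoped ENNReal NNReal

/-- An *extended limit* (at `∞`): an `ℝ`-linear functional `ω` on the space of
all functions `(0,∞) → ℝ` (modelled as `ℝ → ℝ`) such that `ω 1 = 1`, `ω` is
monotone on functions bounded near `∞`, and `ω f = 0` whenever `f → 0` at `∞`. -/
structure ExtendedLimit where
  toFun : (ℝ → ℝ) →ₗ[ℝ] ℝ
  map_one : toFun 1 = 1
  mono : ∀ f g : ℝ → ℝ, (∀ᶠ t in atTop, f t ≤ g t) →
    (∃ M, ∀ᶠ t in atTop, |f t| ≤ M) → (∃ M, ∀ᶠ t in atTop, |g t| ≤ M) →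
    toFun f ≤ toFun g
  vanish : ∀ f : ℝ → ℝ, Tendsto f atTop (𝓝 (0:ℝ)) → toFun f = 0

/-- A function bounded on a neighbourhood of `∞`. -/
def BoundedNearInfty (f : ℝ → ℝ) : Prop := ∃ M, ∀ᶠ t in atTop, |f t| ≤ M

/-- An extended limit is *exponentiation invariant* if `ω (t ↦ f (t^α)) = ω f`
for every `α ≥ 1` and every `f` bounded near `∞`. -/
def ExpInvariant (ω : ExtendedLimit) : Prop :=
  ∀ f : ℝ → ℝ, BoundedNearInfty f → ∀ α : ℝ, 1 ≤ α →
    ω.toFun (fun t => f (t ^ α)) = ω.toFun f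

/-- (Proposition 2.8 (b).)  Let `ψ` be increasing, concave,
`ψ 0 = 0`, `ψ → ∞`, satisfying (2.1).  Let `H : (0,∞) → [0,∞)` be
nonincreasing, in `L^q(0,∞)` for all `1 < q < 1+δ`, with
`sup_{t>2} (1/ψ t) ∫₀ᵗ H < ∞`.  With `D t` the Lebesgue measure of
`{s > 0 : H s > 1/t}` (i.e. `μ_H(1/t)`), every exponentiation invariant
extended limit `ω` satisfies
`ω (t ↦ (1/ψ t) ∫₀ᵗ H) = ω (t ↦ (1/ψ t) ∫₀^{D t} H)`. -/
theorem statement5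
    (ψ : ℝ → ℝ)
    (hψ_mono : MonotoneOn ψ (Set.Ici 0))
    (hψ_conc : ConcaveOn ℝ (Set.Ici 0) ψ)
    (hψ_zero : ψ 0 = 0)
    (hψ_top : Tendsto ψ atTop atTop)
    (h21 : ∀ α : ℝ, 1 < α →
      ∃ A : ℝ, Tendsto (fun t : ℝ => ψ (t ^ α) / ψ t) atTop (𝓝 A))
    (δ : ℝ) (hδ : 0 < δ)
    (H : ℝ → ℝ)
    (hH_anti : AntitoneOn H (Set.Ioi 0))
    (hH_nonneg : ∀ s, 0 ≤ H s)
    (hH_Lq : ∀ q : ℝ, 1 < q → q < 1 + δ →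
      MemLp H (ENNReal.ofReal q) (volume.restrict (Set.Ioi 0)))
    (hcH : ∃ M : ℝ, ∀ t : ℝ, 2 < t → (∫ s in (0:ℝ)..t, H s) / ψ t ≤ M) :
    ∀ ω : ExtendedLimit, ExpInvariant ω →
      ω.toFun (fun t : ℝ => (∫ s in (0:ℝ)..t, H s) / ψ t)
        = ω.toFun (fun t : ℝ =>
            (∫ s in (0:ℝ)..((volume {s : ℝ | 0 < s ∧ 1/t < H s}).toReal), H s) / ψ t) := by
  intro ω hω
  set F : ℝ → ℝ := fun t => ∫ s in (0:ℝ)..t, H s with hFdef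
  set D : ℝ → ℝ := fun t => (volume {s : ℝ | 0 < s ∧ 1/t < H s}).toReal with hDdef
  set f : ℝ → ℝ := fun t => F t / ψ t with hfdef
  set g : ℝ → ℝ := fun t => F (D t) / ψ t with hgdef
  show ω.toFun f = ω.toFun g
  have hψ_pos : ∀ᶠ t in atTop, 0 < ψ t := hψ_top.eventually_gt_atTop 0
  -- measurability of the level sets
  have hSmeas : ∀ t : ℝ, MeasurableSet {s : ℝ | 0 < s ∧ 1/t < H s} := by
    intro t
    apply Set.OrdConnected.measurableSet
    constructor
    intro x hx y hy z hz
    exact ⟨lt_of_lt_of_le hx.1 hz.1,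
      lt_of_lt_of_le hy.2 (hH_anti (lt_of_lt_of_le hx.1 hz.1) hy.1 hz.2)⟩
  -- Chebyshev bound
  have cheb : ∀ q : ℝ, 1 < q → q < 1 + δ → ∃ C : ℝ, 0 ≤ C ∧ ∀ t : ℝ, 0 < t →
      volume {s : ℝ | 0 < s ∧ 1/t < H s} ≤ ENNReal.ofReal (C * t ^ q) := by
    intro q hq1 hq2
    have hq0 : 0 < q := by linarith
    have hp0 : ENNReal.ofReal q ≠ 0 := by simp [ENNReal.ofReal_eq_zero]; linarith
    have hmem := hH_Lq q hq1 hq2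
    have hI : (∫⁻ s in Set.Ioi (0:ℝ), (‖H s‖₊ : ℝ≥0∞) ^ q) < ∞ := by
      have h2 := hmem.2
      rw [eLpNorm_eq_lintegral_rpow_enorm_toReal hp0 ENNReal.ofReal_ne_top] at h2
      rw [ENNReal.toReal_ofReal hq0.le] at h2
      exact (ENNReal.rpow_lt_top_iff_of_pos (by positivity : (0:ℝ) < 1/q)).mp h2
    refine ⟨(∫⁻ s in Set.Ioi (0:ℝ), (‖H s‖₊ : ℝ≥0∞) ^ q).toReal, ENNReal.toReal_nonneg, ?_⟩
    intro t ht
    have hkey : ENNReal.ofReal (1/t) ^ q * volume {s : ℝ | 0 < s ∧ 1/t < H s}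
        ≤ ∫⁻ s in Set.Ioi (0:ℝ), (‖H s‖₊ : ℝ≥0∞) ^ q := by
      rw [← setLIntegral_const {s : ℝ | 0 < s ∧ 1/t < H s} _]
      refine le_trans (lintegral_mono_ae ?_) (lintegral_mono_set (fun s hs => hs.1))
      filter_upwards [ae_restrict_mem (hSmeas t)] with s hs
      have : ENNReal.ofReal (1/t) ≤ (‖H s‖₊ : ℝ≥0∞) := by
        rw [← enorm_eq_nnnorm, Real.enorm_eq_ofReal (hH_nonneg s)]
        exact ENNReal.ofReal_le_ofReal hs.2.le
      exact ENNReal.rpow_le_rpow this hq0.le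
    have hone : ENNReal.ofReal t ^ q * ENNReal.ofReal (1/t) ^ q = 1 := by
      rw [← ENNReal.mul_rpow_of_ne_top ENNReal.ofReal_ne_top ENNReal.ofReal_ne_top,
        ← ENNReal.ofReal_mul ht.le, mul_one_div_cancel (ne_of_gt ht), ENNReal.ofReal_one,
        ENNReal.one_rpow]
    calc volume {s : ℝ | 0 < s ∧ 1/t < H s}
        = ENNReal.ofReal t ^ q * (ENNReal.ofReal (1/t) ^ q
            * volume {s : ℝ | 0 < s ∧ 1/t < H s}) := by rw [← mul_assoc, hone, one_mul]
      _ ≤ ENNReal.ofReal t ^ q * ∫⁻ s in Set.Ioi (0:ℝ), (‖H s‖₊ : ℝ≥0∞) ^ q :=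
          by gcongr
      _ = ENNReal.ofReal ((∫⁻ s in Set.Ioi (0:ℝ), (‖H s‖₊ : ℝ≥0∞) ^ q).toReal * t ^ q) := by
          rw [ENNReal.ofReal_mul' (Real.rpow_nonneg ht.le q), ENNReal.ofReal_toReal hI.ne,
            ← ENNReal.ofReal_rpow_of_pos ht, mul_comm]
  -- finiteness of the level sets
  have hfin : ∀ t : ℝ, 0 < t → volume {s : ℝ | 0 < s ∧ 1/t < H s} ≠ ∞ := by
    intro t ht
    obtain ⟨C, hC0, hC⟩ := cheb (1 + δ/2) (by linarith) (by linarith)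
    exact ne_top_of_le_ne_top ENNReal.ofReal_ne_top (hC t ht)
  -- D is eventually dominated by any power t^β with β > 1
  have hD_le : ∀ β : ℝ, 1 < β → ∀ᶠ t in atTop, D t ≤ t ^ β := by
    intro β hβ
    set q : ℝ := min ((1 + β)/2) (1 + δ/2) with hqdef
    have hq1 : 1 < q := lt_min (by linarith) (by linarith)
    have hq2 : q < 1 + δ := lt_of_le_of_lt (min_le_right _ _) (by linarith)
    have hqβ : q < β := lt_of_le_of_lt (min_le_left _ _) (by linarith)
    obtain ⟨C, hC0, hC⟩ := cheb q hq1 hq2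
    have hpow : Tendsto (fun t : ℝ => t ^ (β - q)) atTop atTop :=
      tendsto_rpow_atTop (by linarith)
    filter_upwards [hpow.eventually_ge_atTop C, eventually_ge_atTop (1:ℝ)] with t h1 h2
    have ht0 : (0:ℝ) < t := by linarith
    have hDle : D t ≤ C * t ^ q := by
      have := ENNReal.toReal_mono ENNReal.ofReal_ne_top (hC t ht0)
      rwa [ENNReal.toReal_ofReal (by positivity)] at this
    calc D t ≤ C * t ^ q := hDle
      _ ≤ t ^ (β - q) * t ^ q := mul_le_mul_of_nonneg_right h1 (Real.rpow_nonneg ht0.le q)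
      _ = t ^ β := by rw [← Real.rpow_add ht0]; ring_nf
  -- integrability
  have hInt : ∀ b : ℝ, IntegrableOn H (Set.Ioc 0 b) := by
    intro b
    have hq : (1:ℝ) < 1 + δ/2 := by linarith
    have hmem := (hH_Lq (1 + δ/2) hq (by linarith)).restrict (Set.Ioc 0 b)
    rw [Measure.restrict_restrict measurableSet_Ioc,
      Set.inter_eq_left.mpr Set.Ioc_subset_Ioi_self] at hmem
    exact hmem.integrable (by rw [ENNReal.one_le_ofReal]; linarith)
  have hII : ∀ a b : ℝ, 0 ≤ a → 0 ≤ b → IntervalIntegrable H volume a b := by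
    intro a b ha hb
    rcases le_total a b with h | h
    · rw [intervalIntegrable_iff_integrableOn_Ioc_of_le h]
      exact (hInt b).mono_set (Set.Ioc_subset_Ioc_left ha)
    · exact ((intervalIntegrable_iff_integrableOn_Ioc_of_le h).mpr
        ((hInt a).mono_set (Set.Ioc_subset_Ioc_left hb))).symm
  have hF_mono : ∀ a b : ℝ, 0 ≤ a → a ≤ b → F a ≤ F b := by
    intro a b ha hab
    have h1 : F b = F a + ∫ s in a..b, H s := by
      rw [hFdef]
      exact (intervalIntegral.integral_add_adjacent_intervals (hII 0 a le_rfl ha)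
        (hII a b ha (le_trans ha hab))).symm
    have h2 : 0 ≤ ∫ s in a..b, H s :=
      intervalIntegral.integral_nonneg hab (fun s _ => hH_nonneg s)
    linarith
  have hF_nonneg : ∀ b : ℝ, 0 ≤ b → 0 ≤ F b := fun b hb =>
    intervalIntegral.integral_nonneg hb (fun s _ => hH_nonneg s)
  have hD_nonneg : ∀ t, 0 ≤ D t := fun t => ENNReal.toReal_nonneg
  -- key pointwise estimate : F t ≤ F (D t) + 1 for t > 1
  have hkey1 : ∀ t : ℝ, 1 < t → F t ≤ F (D t) + 1 := by
    intro t ht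
    have ht0 : (0:ℝ) < t := by linarith
    rcases le_total t (D t) with h | h
    · linarith [hF_mono t (D t) ht0.le h]
    · have hub : ∀ s ∈ Set.Ioc (D t) t, H s ≤ 1/t := by
        intro s hs
        by_contra hc
        push_neg at hc
        have hs0 : 0 < s := lt_of_le_of_lt (hD_nonneg t) hs.1
        have hsub : Set.Ioc 0 s ⊆ {u : ℝ | 0 < u ∧ 1/t < H u} := by
          intro u hu
          exact ⟨hu.1, lt_of_lt_of_le hc (hH_anti hu.1 hs0 hu.2)⟩
        have hv : ENNReal.ofReal s ≤ volume {u : ℝ | 0 < u ∧ 1/t < H u} := by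
          calc ENNReal.ofReal s = volume (Set.Ioc (0:ℝ) s) := by
                rw [Real.volume_Ioc, sub_zero]
            _ ≤ _ := measure_mono hsub
        have h2 := ENNReal.toReal_mono (hfin t ht0) hv
        rw [ENNReal.toReal_ofReal hs0.le] at h2
        have h3 : s ≤ D t := h2
        linarith [hs.1]
      have hsplit : F t = F (D t) + ∫ s in (D t)..t, H s := by
        rw [hFdef]
        exact (intervalIntegral.integral_add_adjacent_intervals
          (hII 0 (D t) le_rfl (hD_nonneg t)) (hII (D t) t (hD_nonneg t) ht0.le)).symm
      have htail : (∫ s in (D t)..t, H s) ≤ 1 := by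
        rw [intervalIntegral.integral_of_le h]
        calc (∫ s in Set.Ioc (D t) t, H s)
            ≤ ∫ s in Set.Ioc (D t) t, (1/t : ℝ) := by
              apply setIntegral_mono_on
              · exact (hInt t).mono_set (Set.Ioc_subset_Ioc_left (hD_nonneg t))
              · exact integrableOn_const
                  (by rw [Real.volume_Ioc]; exact ENNReal.ofReal_ne_top)
              · exact measurableSet_Ioc
              · exact hub
          _ = (t - D t) * (1/t) := by
              rw [setIntegral_const, Real.volume_real_Ioc_of_le h,
                smul_eq_mul]
          _ ≤ 1 := by
              rw [mul_one_div]
              apply div_le_one_of_le₀ <;> [linarith [hD_nonneg t]; linarith]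
      linarith
  -- boundedness of f
  obtain ⟨M, hM⟩ := hcH
  have hf_ev : ∀ᶠ t in atTop, 0 ≤ f t ∧ f t ≤ M := by
    filter_upwards [hψ_pos, eventually_gt_atTop (2:ℝ)] with t h1 h2
    exact ⟨div_nonneg (hF_nonneg t (by linarith)) h1.le, hM t h2⟩
  have hM0 : 0 ≤ M := by
    obtain ⟨t, ht⟩ := hf_ev.exists
    linarith [ht.1, ht.2]
  have hf_bdd : BoundedNearInfty f := by
    refine ⟨M, ?_⟩
    filter_upwards [hf_ev] with t ht
    rw [abs_le]; constructor <;> linarith [ht.1, ht.2]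
  -- boundedness of g
  have hg_le : ∀ β : ℝ, 1 < β → ∀ᶠ t in atTop,
      g t ≤ f (t ^ β) * (ψ (t ^ β) / ψ t) ∧ 0 ≤ g t := by
    intro β hβ
    have hβ0 : (0:ℝ) < β := by linarith
    filter_upwards [hD_le β hβ, hψ_pos, (tendsto_rpow_atTop hβ0).eventually hψ_pos,
      eventually_ge_atTop (1:ℝ)] with t h1 h2 h3 h4
    have hFle : F (D t) ≤ F (t ^ β) := hF_mono (D t) (t ^ β) (hD_nonneg t) h1
    constructor
    · have hstep : g t ≤ F (t ^ β) / ψ t := by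
        rw [hgdef]
        exact div_le_div_of_nonneg_right hFle h2.le
      refine hstep.trans_eq ?_
      rw [hfdef]
      field_simp
    · exact div_nonneg (hF_nonneg (D t) (hD_nonneg t)) h2.le
  have hg_bdd : BoundedNearInfty g := by
    obtain ⟨A2, hA2⟩ := h21 2 (by norm_num)
    refine ⟨M * (|A2| + 1), ?_⟩
    have hr_ev : ∀ᶠ t in atTop, |ψ (t ^ (2:ℝ)) / ψ t - A2| ≤ 1 :=
      (hA2.sub_const A2).norm.eventually_le_const (by rw [sub_self, norm_zero]; norm_num)
    have hf2_ev : ∀ᶠ t in atTop, 0 ≤ f (t ^ (2:ℝ)) ∧ f (t ^ (2:ℝ)) ≤ M :=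
      (tendsto_rpow_atTop (by norm_num : (0:ℝ) < 2)).eventually hf_ev
    filter_upwards [hg_le 2 (by norm_num), hr_ev, hf2_ev, hψ_pos,
      (tendsto_rpow_atTop (by norm_num : (0:ℝ) < 2)).eventually hψ_pos] with t h1 h2 h3 h4 h5
    rw [abs_of_nonneg h1.2]
    have hrnn : 0 ≤ ψ (t ^ (2:ℝ)) / ψ t := div_nonneg h5.le h4.le
    have hrle : ψ (t ^ (2:ℝ)) / ψ t ≤ |A2| + 1 := by
      have := (abs_le.mp h2).2
      linarith [le_abs_self A2]
    calc g t ≤ f (t ^ (2:ℝ)) * (ψ (t ^ (2:ℝ)) / ψ t) := h1.1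
      _ ≤ M * (|A2| + 1) := mul_le_mul h3.2 hrle hrnn hM0
  -- direction 1 : ω f ≤ ω g
  have hvan : Tendsto (fun t : ℝ => 1 / ψ t) atTop (𝓝 0) := by
    simp only [one_div]; exact hψ_top.inv_tendsto_atTop
  have hωfg : ω.toFun f ≤ ω.toFun g := by
    have hle : ∀ᶠ t in atTop, f t ≤ (g + fun t => 1 / ψ t) t := by
      filter_upwards [hψ_pos, eventually_gt_atTop (1:ℝ)] with t h1 h2
      have hk := hkey1 t h2
      show f t ≤ g t + 1 / ψ t
      rw [hfdef, hgdef]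
      calc F t / ψ t ≤ (F (D t) + 1) / ψ t := div_le_div_of_nonneg_right hk h1.le
        _ = F (D t) / ψ t + 1 / ψ t := by rw [add_div]
    have hbdd2 : ∃ M', ∀ᶠ t in atTop, |(g + fun t => 1 / ψ t) t| ≤ M' := by
      obtain ⟨Mg, hMg⟩ := hg_bdd
      refine ⟨Mg + 1, ?_⟩
      have h01 : ∀ᶠ t in atTop, |1 / ψ t| ≤ 1 :=
        hvan.norm.eventually_le_const (by rw [norm_zero]; norm_num)
      filter_upwards [hMg, h01] with t h1 h2
      show |g t + 1 / ψ t| ≤ Mg + 1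
      exact (abs_add_le _ _).trans (by linarith)
    have hm := ω.mono f (g + fun t => 1 / ψ t) hle hf_bdd hbdd2
    rwa [map_add, ω.vanish _ hvan, add_zero] at hm
  -- direction 2 preliminary : ω g ≤ A * ω f for every (2.1)-limit A
  have hkeyβ : ∀ β A : ℝ, 1 < β → Tendsto (fun t : ℝ => ψ (t ^ β) / ψ t) atTop (𝓝 A) →
      ω.toFun g ≤ A * ω.toFun f := by
    intro β A hβ hA
    set u : ℝ → ℝ := fun t => f (t ^ β) * (ψ (t ^ β) / ψ t) with hudef
    set e : ℝ → ℝ := fun t => f (t ^ β) * (ψ (t ^ β) / ψ t - A) with hedef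
    have hβ0 : (0:ℝ) < β := by linarith
    have hf2_ev : ∀ᶠ t in atTop, 0 ≤ f (t ^ β) ∧ f (t ^ β) ≤ M :=
      (tendsto_rpow_atTop hβ0).eventually hf_ev
    have hr_ev : ∀ᶠ t in atTop, |ψ (t ^ β) / ψ t - A| ≤ 1 :=
      (hA.sub_const A).norm.eventually_le_const (by rw [sub_self, norm_zero]; norm_num)
    have hu_bdd : ∃ M', ∀ᶠ t in atTop, |u t| ≤ M' := by
      refine ⟨M * (|A| + 1), ?_⟩
      filter_upwards [hf2_ev, hr_ev] with t h1 h2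
      show |f (t ^ β) * (ψ (t ^ β) / ψ t)| ≤ _
      rw [abs_mul]
      refine mul_le_mul (by rw [abs_of_nonneg h1.1]; exact h1.2) ?_ (abs_nonneg _) hM0
      have := abs_sub_abs_le_abs_sub (ψ (t ^ β) / ψ t) A
      linarith
    have h1 : ω.toFun g ≤ ω.toFun u :=
      ω.mono g u ((hg_le β hβ).mono (fun t ht => ht.1)) hg_bdd hu_bdd
    have hdecomp : u = A • (fun t => f (t ^ β)) + e := by
      funext t
      show f (t ^ β) * (ψ (t ^ β) / ψ t) = A * f (t ^ β) + f (t ^ β) * (ψ (t ^ β) / ψ t - A)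
      ring
    have hevan : Tendsto e atTop (𝓝 0) := by
      apply squeeze_zero_norm' (a := fun t => M * |ψ (t ^ β) / ψ t - A|)
      · filter_upwards [hf2_ev] with t ht
        show ‖f (t ^ β) * (ψ (t ^ β) / ψ t - A)‖ ≤ _
        rw [Real.norm_eq_abs, abs_mul]
        exact mul_le_mul_of_nonneg_right (by rw [abs_of_nonneg ht.1]; exact ht.2)
          (abs_nonneg _)
      · have hz : Tendsto (fun t => ψ (t ^ β) / ψ t - A) atTop (𝓝 0) := by
          simpa using hA.sub_const A
        have := (hz.abs).const_mul M
        simpa using this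
    have h2 : ω.toFun u = A * ω.toFun f := by
      rw [hdecomp, map_add, LinearMap.map_smul, smul_eq_mul, ω.vanish e hevan, add_zero,
        hω f hf_bdd β hβ.le]
    linarith
  -- limits in (2.1) are ≥ 1
  have hge1 : ∀ β A : ℝ, 1 < β → Tendsto (fun t : ℝ => ψ (t ^ β) / ψ t) atTop (𝓝 A) →
      1 ≤ A := by
    intro β A hβ hA
    refine ge_of_tendsto hA ?_
    filter_upwards [hψ_pos, (tendsto_rpow_atTop (by linarith : (0:ℝ) < β)).eventually hψ_pos,
      eventually_ge_atTop 1] with t h1 h2 h3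
    have htβ : t ≤ t ^ β := by
      nth_rewrite 1 [← Real.rpow_one t]
      exact Real.rpow_le_rpow_of_exponent_le h3 hβ.le
    have hm : ψ t ≤ ψ (t ^ β) :=
      hψ_mono (by linarith : (0:ℝ) ≤ t) (by linarith : (0:ℝ) ≤ t ^ β) htβ
    rw [le_div_iff₀ h1, one_mul]
    exact hm
  -- squaring identity for (2.1)-limits
  have hsq : ∀ γ A A' : ℝ, 1 < γ →
      Tendsto (fun t : ℝ => ψ (t ^ γ) / ψ t) atTop (𝓝 A) →
      Tendsto (fun t : ℝ => ψ (t ^ (γ * γ)) / ψ t) atTop (𝓝 A') → A' = A * A := by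
    intro γ A A' hγ hA hA'
    have hγ0 : (0:ℝ) < γ := by linarith
    have hcomp : Tendsto (fun t : ℝ => ψ ((t ^ γ) ^ γ) / ψ (t ^ γ)) atTop (𝓝 A) :=
      hA.comp (tendsto_rpow_atTop hγ0)
    have hmul : Tendsto (fun t : ℝ => ψ ((t ^ γ) ^ γ) / ψ (t ^ γ) * (ψ (t ^ γ) / ψ t))
        atTop (𝓝 (A * A)) := hcomp.mul hA
    have hEq : (fun t : ℝ => ψ ((t ^ γ) ^ γ) / ψ (t ^ γ) * (ψ (t ^ γ) / ψ t)) =ᶠ[atTop]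
        (fun t : ℝ => ψ (t ^ (γ * γ)) / ψ t) := by
      filter_upwards [(tendsto_rpow_atTop hγ0).eventually hψ_pos,
        eventually_ge_atTop (0:ℝ)] with t h1 h2
      rw [← Real.rpow_mul h2]
      field_simp
    exact tendsto_nhds_unique hA' (hmul.congr' hEq)
  -- the sequence βₙ = 2^{2⁻ⁿ}
  set a : ℕ → ℝ := fun n => (2:ℝ) ^ ((1/2:ℝ) ^ n) with hadef
  have ha1 : ∀ n, 1 < a n := by
    intro n
    rw [hadef]
    exact Real.one_lt_rpow_iff_of_pos (by norm_num) |>.mpr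
      (Or.inl ⟨by norm_num, by positivity⟩)
  have haa : ∀ n, a (n + 1) * a (n + 1) = a n := by
    intro n
    rw [hadef]
    simp only
    rw [← Real.rpow_add (by norm_num : (0:ℝ) < 2)]
    congr 1
    rw [pow_succ]
    ring
  choose B hB using fun n => h21 (a n) (ha1 n)
  have hB1 : ∀ n, 1 ≤ B n := fun n => hge1 (a n) (B n) (ha1 n) (hB n)
  have hBrel : ∀ n, B n = B (n + 1) * B (n + 1) := by
    intro n
    refine hsq (a (n+1)) (B (n+1)) (B n) (ha1 (n+1)) (hB (n+1)) ?_
    rw [haa n]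
    exact hB n
  have hBform : ∀ n, B n = (B 0) ^ ((1/2:ℝ) ^ n) := by
    intro n
    induction n with
    | zero => simp
    | succ n ih =>
      have h1 : B (n+1) = Real.sqrt (B n) := by
        rw [hBrel n, Real.sqrt_mul_self (by linarith [hB1 (n+1)])]
      rw [h1, ih, Real.sqrt_eq_rpow, ← Real.rpow_mul (by linarith [hB1 0]), pow_succ]
  have hBtend : Tendsto B atTop (𝓝 1) := by
    have h0 : Tendsto (fun n : ℕ => (1/2:ℝ) ^ n) atTop (𝓝 0) :=
      tendsto_pow_atTop_nhds_zero_of_lt_one (by norm_num) (by norm_num)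
    have hc : ContinuousAt (fun y : ℝ => (B 0) ^ y) 0 :=
      Real.continuousAt_const_rpow (by linarith [hB1 0])
    have h2 := hc.tendsto.comp h0
    rw [Real.rpow_zero] at h2
    exact Tendsto.congr (fun n => (hBform n).symm) h2
  have hωgf : ω.toFun g ≤ ω.toFun f := by
    have hle : ∀ n, ω.toFun g ≤ B n * ω.toFun f :=
      fun n => hkeyβ (a n) (B n) (ha1 n) (hB n)
    have hlim : Tendsto (fun n => B n * ω.toFun f) atTop (𝓝 (1 * ω.toFun f)) :=
      hBtend.mul_const _
    rw [one_mul] at hlim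
    exact ge_of_tendsto' hlim hle
  exact le_antisymm hωfg hωgf
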